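/- Let $k$ be a field of characteristic $p > 0$. The Weyl algebra $A = k\langle x, d\rangle/(dx - xd - 1)$ is a free module of rank $p^2$ over its center $k[x^p, d^p]$, with basis the monomials $x^i d^j$ for $0 \le i, j \le p-1$. -/

import Mathlib

/-- The defining relation of the Weyl algebra: `d * x = x * d + 1`
(generator `false` is `x`, generator `true` is `d`). -/
inductive WeylRel (k : Type) [Field k] : FreeAlgebra k Bool → FreeAlgebra k Bool → Prop
  | rel : WeylRel k (FreeAlgebra.ι k true * FreeAlgebra.ι k false)
      (FreeAlgebra.ι k false * FreeAlgebra.ι k true + 1)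

/-- The generator `x` of the Weyl algebra. -/
noncomputable def Wx (k : Type) [Field k] : RingQuot (WeylRel k) :=
  RingQuot.mkAlgHom k (WeylRel k) (FreeAlgebra.ι k false)

/-- The generator `d` of the Weyl algebra. -/
noncomputable def Wd (k : Type) [Field k] : RingQuot (WeylRel k) :=
  RingQuot.mkAlgHom k (WeylRel k) (FreeAlgebra.ι k true)

namespace Statement6

variable (k : Type) [Field k]

/-- The normal-form monomials `x^a * d^b`. -/
noncomputable def We (a b : ℕ) : RingQuot (WeylRel k) := Wx k ^ a * Wd k ^ b

theorem dx_rel : Wd k * Wx k = Wx k * Wd k + 1 := by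
  have := RingQuot.mkAlgHom_rel k (WeylRel.rel (k := k))
  simpa [Wx, Wd, map_mul, map_add, map_one] using this

theorem d_pow_x (n : ℕ) :
    Wd k ^ n * Wx k = Wx k * Wd k ^ n + n • Wd k ^ (n - 1) := by
  induction n with
  | zero => simp
  | succ n ih =>
    have h1 : Wd k ^ (n + 1) * Wx k = Wd k * (Wd k ^ n * Wx k) := by
      rw [pow_succ', mul_assoc]
    rw [h1, ih, mul_add, ← mul_assoc, dx_rel, mul_smul_comm]
    have h2 : Wd k * Wd k ^ (n - 1) = Wd k ^ n ∨ n = 0 := by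
      cases n with
      | zero => exact Or.inr rfl
      | succ m => exact Or.inl (by rw [← pow_succ']; norm_num)
    rcases h2 with h2 | h2
    · rw [h2, add_mul, one_mul, mul_assoc, ← pow_succ', succ_nsmul]
      rw [Nat.add_sub_cancel, add_assoc, add_comm (Wd k ^ n)]
    · subst h2; simp [add_mul, mul_assoc, ← pow_succ']

theorem x_pow_d (n : ℕ) :
    Wd k * Wx k ^ n = Wx k ^ n * Wd k + n • Wx k ^ (n - 1) := by
  induction n with
  | zero => simp
  | succ n ih =>
    have h1 : Wd k * Wx k ^ (n + 1) = (Wd k * Wx k ^ n) * Wx k := by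
      rw [pow_succ, mul_assoc]
    rw [h1, ih, add_mul, mul_assoc, dx_rel, smul_mul_assoc]
    have h2 : Wx k ^ (n - 1) * Wx k = Wx k ^ n ∨ n = 0 := by
      cases n with
      | zero => exact Or.inr rfl
      | succ m => exact Or.inl (by rw [← pow_succ]; norm_num)
    rcases h2 with h2 | h2
    · rw [h2, mul_add, mul_one, ← mul_assoc, ← pow_succ, succ_nsmul]
      rw [Nat.add_sub_cancel, add_assoc, add_comm (Wx k ^ n)]
    · subst h2; simp [mul_add, ← mul_assoc, ← pow_succ]

variable (p : ℕ) (hp : p.Prime) [CharP k p]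

theorem nsmul_p (a : RingQuot (WeylRel k)) : p • a = 0 := by
  rw [← Nat.cast_smul_eq_nsmul k, CharP.cast_eq_zero, zero_smul]

theorem comm_dp_x : Commute (Wd k ^ p) (Wx k) := by
  show _ = _
  rw [d_pow_x, nsmul_p, add_zero]

theorem comm_xp_d : Commute (Wx k ^ p) (Wd k) := by
  show _ = _
  have := x_pow_d k p
  rw [nsmul_p, add_zero] at this
  exact this.symm

theorem We_mul (a b i j : ℕ) :
    We k (p * a) (p * b) * We k i j = We k (p * a + i) (p * b + j) := by
  have hc : Commute (Wd k ^ (p * b)) (Wx k ^ i) := by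
    rw [pow_mul]
    exact ((comm_dp_x k p).pow_left b).pow_right i
  unfold We
  rw [pow_add, pow_add]
  calc Wx k ^ (p * a) * Wd k ^ (p * b) * (Wx k ^ i * Wd k ^ j)
      = Wx k ^ (p * a) * (Wd k ^ (p * b) * Wx k ^ i) * Wd k ^ j := by
        simp [mul_assoc]
    _ = Wx k ^ (p * a) * (Wx k ^ i * Wd k ^ (p * b)) * Wd k ^ j := by rw [hc.eq]
    _ = Wx k ^ (p * a) * Wx k ^ i * (Wd k ^ (p * b) * Wd k ^ j) := by
        simp [mul_assoc]

theorem We_mul_x (i j : ℕ) :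
    We k i j * Wx k = We k (i + 1) j + j • We k i (j - 1) := by
  unfold We
  rw [mul_assoc, d_pow_x, mul_add, ← mul_assoc, ← pow_succ, mul_smul_comm]

theorem We_mul_d (i j : ℕ) : We k i j * Wd k = We k i (j + 1) := by
  unfold We
  rw [mul_assoc, ← pow_succ]

/-! ### A representation of the Weyl algebra on `k[X, Y]` -/

/-- `∂/∂X` on `k[X,Y] := MvPolynomial Bool k` (where `X` is variable `false`). -/
noncomputable def DX : Module.End k (MvPolynomial Bool k) :=
  (MvPolynomial.pderiv false).toLinearMap

theorem DX_pderiv (f : MvPolynomial Bool k) : DX k f = MvPolynomial.pderiv false f := rfl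

/-- Multiplication operator. -/
noncomputable def mulV (f : MvPolynomial Bool k) : Module.End k (MvPolynomial Bool k) :=
  Algebra.lmul k (MvPolynomial Bool k) f

theorem mulV_apply (f g : MvPolynomial Bool k) : mulV k f g = f * g := rfl

theorem mulV_pow (f : MvPolynomial Bool k) (n : ℕ) : mulV k f ^ n = mulV k (f ^ n) := by
  rw [mulV, mulV, map_pow]

/-- The representation, on the free algebra. -/
noncomputable def rho0 : FreeAlgebra k Bool →ₐ[k] Module.End k (MvPolynomial Bool k) :=
  FreeAlgebra.lift k
    (fun b => if b then DX k + mulV k (MvPolynomial.X true) else mulV k (MvPolynomial.X false))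

theorem rho0_rel : ∀ ⦃a b : FreeAlgebra k Bool⦄, WeylRel k a b → rho0 k a = rho0 k b := by
  rintro _ _ ⟨⟩
  apply LinearMap.ext
  intro f
  simp only [map_mul, map_add, map_one, rho0, FreeAlgebra.lift_ι_apply,
    Bool.false_eq_true, if_true, if_false, Module.End.mul_apply, LinearMap.add_apply,
    Module.End.one_apply, mulV_apply, DX_pderiv, MvPolynomial.pderiv_mul,
    MvPolynomial.pderiv_X_self]
  ring

/-- The representation of the Weyl algebra. -/
noncomputable def rho : RingQuot (WeylRel k) →ₐ[k] Module.End k (MvPolynomial Bool k) :=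
  RingQuot.liftAlgHom k ⟨rho0 k, rho0_rel k⟩

theorem rho_x : rho k (Wx k) = mulV k (MvPolynomial.X false) := by
  rw [rho, Wx, RingQuot.liftAlgHom_mkAlgHom_apply, rho0, FreeAlgebra.lift_ι_apply, if_neg]
  simp

theorem rho_d : rho k (Wd k) = DX k + mulV k (MvPolynomial.X true) := by
  rw [rho, Wd, RingQuot.liftAlgHom_mkAlgHom_apply, rho0, FreeAlgebra.lift_ι_apply, if_pos rfl]

theorem pderiv_Y_pow (n : ℕ) :
    MvPolynomial.pderiv false ((MvPolynomial.X true : MvPolynomial Bool k) ^ n) = 0 := by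
  rw [Derivation.leibniz_pow, MvPolynomial.pderiv_X_of_ne (by simp)]
  simp

theorem rho_d_pow_apply (n m : ℕ) :
    ((rho k (Wd k)) ^ n) ((MvPolynomial.X true : MvPolynomial Bool k) ^ m) =
      MvPolynomial.X true ^ (n + m) := by
  induction n with
  | zero => simp
  | succ n ih =>
    rw [pow_succ', Module.End.mul_apply, ih, rho_d, LinearMap.add_apply, DX_pderiv,
      pderiv_Y_pow, mulV_apply, zero_add]
    ring

theorem rho_We_one (a b : ℕ) :
    rho k (We k a b) (1 : MvPolynomial Bool k) =
      MvPolynomial.X false ^ a * MvPolynomial.X true ^ b := by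
  have h1 : ((rho k (Wd k)) ^ b) (1 : MvPolynomial Bool k) = MvPolynomial.X true ^ b := by
    simpa using rho_d_pow_apply k b 0
  rw [We, map_mul, Module.End.mul_apply, map_pow, map_pow, h1, rho_x, mulV_pow]
  exact mulV_apply k _ _

/-- The monomials `X^a Y^b` in `k[X,Y]`. -/
noncomputable def mu (q : ℕ × ℕ) : MvPolynomial Bool k :=
  MvPolynomial.X false ^ q.1 * MvPolynomial.X true ^ q.2

theorem mu_monomial (q : ℕ × ℕ) :
    mu k q = MvPolynomial.monomial (Finsupp.single false q.1 + Finsupp.single true q.2) 1 := by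
  rw [mu, MvPolynomial.X_pow_eq_monomial, MvPolynomial.X_pow_eq_monomial,
    MvPolynomial.monomial_mul, one_mul]

theorem mu_li : LinearIndependent k (mu k) := by
  have h := (MvPolynomial.basisMonomials Bool k).linearIndependent.comp
    (fun q : ℕ × ℕ => Finsupp.single false q.1 + Finsupp.single true q.2) ?_
  · convert h using 1
    funext q
    rw [mu_monomial]
    simp [MvPolynomial.coe_basisMonomials]
    · rfl
    · rfl
  · intro q r h
    have h1 := DFunLike.congr_fun h false
    have h2 := DFunLike.congr_fun h true
    simp [Finsupp.single_apply] at h1 h2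
    exact Prod.ext h1 h2

/-- Evaluation of the representation at `1`, as a linear map. -/
noncomputable def Phi : RingQuot (WeylRel k) →ₗ[k] MvPolynomial Bool k where
  toFun a := rho k a (1 : MvPolynomial Bool k)
  map_add' a b := by simp
  map_smul' c a := by simp

theorem We_li : LinearIndependent k (fun q : ℕ × ℕ => We k q.1 q.2) := by
  apply LinearIndependent.of_comp (Phi k)
  have : (Phi k) ∘ (fun q : ℕ × ℕ => We k q.1 q.2) = mu k := by
    funext q
    simp only [Function.comp_apply, Phi, LinearMap.coe_mk, AddHom.coe_mk]
    rw [rho_We_one, mu]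
  rw [this]
  exact mu_li k

end Statement6

set_option maxHeartbeats 2000000 in
/-- In characteristic `p`, the Weyl algebra is free of rank `p^2` over its center
`k[x^p, d^p]`, with basis the monomials `x^i * d^j`, `0 ≤ i, j ≤ p - 1`. -/
theorem statement6 (k : Type) [Field k] (p : ℕ) (hp : p.Prime) [CharP k p] :
    ∃ b : Module.Basis (Fin p × Fin p) (Algebra.adjoin k {Wx k ^ p, Wd k ^ p})
        (RingQuot (WeylRel k)),
      ∀ ij : Fin p × Fin p, b ij = Wx k ^ (ij.1 : ℕ) * Wd k ^ (ij.2 : ℕ) := by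
  classical
  haveI : Fact p.Prime := ⟨hp⟩
  set R := Algebra.adjoin k {Wx k ^ p, Wd k ^ p} with hR
  set v : Fin p × Fin p → RingQuot (WeylRel k) :=
    fun ij => Statement6.We k (ij.1 : ℕ) (ij.2 : ℕ) with hv
  -- every element of the center is a `k`-combination of `x^(p*a) d^(p*b)`
  have mem_spanZ : ∀ z ∈ R, z ∈ Submodule.span k
      (Set.range fun q : ℕ × ℕ => Statement6.We k (p * q.1) (p * q.2)) := by
    intro z hz
    induction hz using Algebra.adjoin_induction with
    | mem s hs =>
      rcases hs with h | h
      · refine Submodule.subset_span ⟨(1, 0), ?_⟩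
        simp [Statement6.We, h]
      · refine Submodule.subset_span ⟨(0, 1), ?_⟩
        simp only [Set.mem_singleton_iff] at h
        simp [Statement6.We, h]
    | algebraMap r =>
      have h1 : algebraMap k (RingQuot (WeylRel k)) r =
          r • Statement6.We k (p * 0) (p * 0) := by
        simp [Statement6.We, Algebra.algebraMap_eq_smul_one]
      rw [h1]
      exact Submodule.smul_mem _ _ (Submodule.subset_span ⟨(0, 0), rfl⟩)
    | add x y hx hy ihx ihy => exact add_mem ihx ihy
    | mul x y hx hy ihx ihy =>
      have h := Submodule.mul_mem_mul ihx ihy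
      rw [Submodule.span_mul_span] at h
      refine Submodule.span_le.mpr ?_ h
      rintro - ⟨-, ⟨q1, rfl⟩, -, ⟨q2, rfl⟩, rfl⟩
      refine Submodule.subset_span ⟨(q1.1 + q2.1, q1.2 + q2.2), ?_⟩
      show Statement6.We k (p * (q1.1 + q2.1)) (p * (q1.2 + q2.2)) =
        Statement6.We k (p * q1.1) (p * q1.2) * Statement6.We k (p * q2.1) (p * q2.2)
      rw [Statement6.We_mul k p, Nat.mul_add, Nat.mul_add]
  -- linear independence over the center
  have hli : LinearIndependent R v := by
    refine (Fintype.linearIndependent_iff (R := ↥R) (v := v)).mpr ?_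
    intro g hg
    have hrep : ∀ ij : Fin p × Fin p, ∃ c : ℕ × ℕ →₀ k,
        (c.sum fun q r => r • Statement6.We k (p * q.1) (p * q.2)) =
          (g ij : RingQuot (WeylRel k)) :=
      fun ij => Finsupp.mem_span_range_iff_exists_finsupp.mp (mem_spanZ _ (g ij).2)
    choose c hc using hrep
    set σ : Fin p × Fin p → ℕ × ℕ → ℕ × ℕ :=
      fun ij q => (p * q.1 + (ij.1 : ℕ), p * q.2 + (ij.2 : ℕ)) with hσ
    have hmod : ∀ (i : Fin p) (a : ℕ), (p * a + (i : ℕ)) % p = (i : ℕ) := by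
      intro i a
      rw [Nat.add_comm, Nat.add_mul_mod_self_left, Nat.mod_eq_of_lt i.isLt]
    have hσinj : ∀ ij, Function.Injective (σ ij) := by
      intro ij q1 q2 h
      simp only [hσ, Prod.mk.injEq] at h
      have h1 : q1.1 = q2.1 := Nat.eq_of_mul_eq_mul_left hp.pos (by omega)
      have h2 : q1.2 = q2.2 := Nat.eq_of_mul_eq_mul_left hp.pos (by omega)
      exact Prod.ext h1 h2
    set F : ℕ × ℕ →₀ k := ∑ ij : Fin p × Fin p, (c ij).mapDomain (σ ij) with hF
    have hterm : ∀ ij : Fin p × Fin p,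
        Finsupp.linearCombination k (fun q : ℕ × ℕ => Statement6.We k q.1 q.2)
          ((c ij).mapDomain (σ ij)) = g ij • v ij := by
      intro ij
      rw [Finsupp.linearCombination_mapDomain, Finsupp.linearCombination_apply]
      have hgv : g ij • v ij = ((g ij : RingQuot (WeylRel k))) * v ij := rfl
      rw [hgv, ← hc ij, Finsupp.sum_mul]
      apply Finsupp.sum_congr
      intro q _
      show ((c ij) q) • Statement6.We k (p * q.1 + (ij.1 : ℕ)) (p * q.2 + (ij.2 : ℕ)) =
        ((c ij) q • Statement6.We k (p * q.1) (p * q.2)) * Statement6.We k (ij.1 : ℕ) (ij.2 : ℕ)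
      rw [smul_mul_assoc, Statement6.We_mul k p]
    have hFtot : Finsupp.linearCombination k
        (fun q : ℕ × ℕ => Statement6.We k q.1 q.2) F = 0 := by
      rw [hF, map_sum, Finset.sum_congr rfl (fun ij _ => hterm ij)]
      exact hg
    have hF0 : F = 0 := linearIndependent_iff.mp (Statement6.We_li k) F hFtot
    have hc0 : ∀ ij, c ij = 0 := by
      intro ij
      ext q
      have hFq : F (σ ij q) = c ij q := by
        rw [hF, Finsupp.finset_sum_apply]
        rw [Finset.sum_eq_single ij]
        · exact Finsupp.mapDomain_apply (hσinj ij) _ q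
        · intro i'j' _ hne
          apply Finsupp.mapDomain_notin_range
          rintro ⟨q', hq'⟩
          apply hne
          simp only [hσ, Prod.mk.injEq] at hq'
          have e1 : (i'j'.1 : ℕ) = (ij.1 : ℕ) := by
            have := congrArg (· % p) hq'.1
            simpa [hmod] using this
          have e2 : (i'j'.2 : ℕ) = (ij.2 : ℕ) := by
            have := congrArg (· % p) hq'.2
            simpa [hmod] using this
          exact Prod.ext (Fin.ext e1) (Fin.ext e2)
        · intro h; exact absurd (Finset.mem_univ ij) h
      rw [hF0] at hFq
      simpa using hFq.symm
    intro ij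
    have hz : (g ij : RingQuot (WeylRel k)) = 0 := by
      rw [← hc ij, hc0 ij, Finsupp.sum_zero_index]
    exact Subtype.ext hz
  -- spanning
  have hspan : ⊤ ≤ Submodule.span R (Set.range v) := by
    set S := Submodule.span R (Set.range v) with hS
    have hWe : ∀ i j : Fin p, Statement6.We k (i : ℕ) (j : ℕ) ∈ S :=
      fun i j => Submodule.subset_span ⟨(i, j), rfl⟩
    have h00 : (1 : RingQuot (WeylRel k)) ∈ S := by
      have := hWe ⟨0, hp.pos⟩ ⟨0, hp.pos⟩
      simpa [Statement6.We] using this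
    have hks : ∀ (r : k), ∀ a ∈ S, r • a ∈ S := by
      intro r a ha
      have hx : r • a =
          (⟨algebraMap k (RingQuot (WeylRel k)) r, Subalgebra.algebraMap_mem R r⟩ : R) • a := by
        show r • a = algebraMap k (RingQuot (WeylRel k)) r * a
        rw [Algebra.smul_def]
      rw [hx]
      exact Submodule.smul_mem _ _ ha
    have hxp_mem : Wx k ^ p ∈ R := Algebra.subset_adjoin (Set.mem_insert _ _)
    have hdp_mem : Wd k ^ p ∈ R :=
      Algebra.subset_adjoin (Set.mem_insert_of_mem _ rfl)
    have hWeP1 : ∀ j : Fin p, Statement6.We k p (j : ℕ) ∈ S := by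
      intro j
      have h0 : Statement6.We k p (j : ℕ) =
          (⟨Wx k ^ p, hxp_mem⟩ : R) • Statement6.We k 0 (j : ℕ) := by
        show Statement6.We k p (j : ℕ) = Wx k ^ p * Statement6.We k 0 (j : ℕ)
        rw [Statement6.We, Statement6.We, pow_zero, one_mul]
      rw [h0]
      exact Submodule.smul_mem _ _ (hWe ⟨0, hp.pos⟩ j)
    have hWeP2 : ∀ i : Fin p, Statement6.We k (i : ℕ) p ∈ S := by
      intro i
      have h0 : Statement6.We k (i : ℕ) p =
          (⟨Wd k ^ p, hdp_mem⟩ : R) • Statement6.We k (i : ℕ) 0 := by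
        show Statement6.We k (i : ℕ) p = Wd k ^ p * Statement6.We k (i : ℕ) 0
        rw [Statement6.We, Statement6.We, pow_zero, mul_one]
        exact (((Statement6.comm_dp_x k p).pow_right (i : ℕ)).eq).symm
      rw [h0]
      exact Submodule.smul_mem _ _ (hWe i ⟨0, hp.pos⟩)
    have hWeS : ∀ i j : ℕ, i ≤ p → j ≤ p → (i < p ∨ j < p) → Statement6.We k i j ∈ S := by
      intro i j hi hj hij
      rcases Nat.lt_or_ge i p with h1 | h1
      · rcases Nat.lt_or_ge j p with h2 | h2
        · exact hWe ⟨i, h1⟩ ⟨j, h2⟩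
        · have : j = p := le_antisymm hj h2
          subst this
          exact hWeP2 ⟨i, h1⟩
      · have : i = p := le_antisymm hi h1
        subst this
        rcases hij with h2 | h2
        · omega
        · exact hWeP1 ⟨j, h2⟩
    have hsmul_mul : ∀ (z : R) (a b : RingQuot (WeylRel k)), (z • a) * b = z • (a * b) := by
      intro z a b
      show (↑z * a) * b = ↑z * (a * b)
      rw [mul_assoc]
    have hmulx : ∀ a ∈ S, a * Wx k ∈ S := by
      intro a ha
      induction ha using Submodule.span_induction with
      | mem b hb =>
        obtain ⟨ij, rfl⟩ := hb
        rw [hv]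
        show Statement6.We k (ij.1 : ℕ) (ij.2 : ℕ) * Wx k ∈ S
        rw [Statement6.We_mul_x]
        refine add_mem ?_ ?_
        · exact hWeS _ _ (by omega) (by omega) (Or.inr ij.2.isLt)
        · exact nsmul_mem (hWeS _ _ (by omega) (by omega) (Or.inr (by omega))) _
      | zero => rw [zero_mul]; exact zero_mem _
      | add x y hx' hy' ihx ihy => rw [add_mul]; exact add_mem ihx ihy
      | smul z x hx' ih => rw [hsmul_mul]; exact Submodule.smul_mem _ _ ih
    have hmuld : ∀ a ∈ S, a * Wd k ∈ S := by
      intro a ha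
      induction ha using Submodule.span_induction with
      | mem b hb =>
        obtain ⟨ij, rfl⟩ := hb
        rw [hv]
        show Statement6.We k (ij.1 : ℕ) (ij.2 : ℕ) * Wd k ∈ S
        rw [Statement6.We_mul_d]
        exact hWeS _ _ (by omega) (by omega) (Or.inl ij.1.isLt)
      | zero => rw [zero_mul]; exact zero_mem _
      | add x y hx' hy' ihx ihy => rw [add_mul]; exact add_mem ihx ihy
      | smul z x hx' ih => rw [hsmul_mul]; exact Submodule.smul_mem _ _ ih
    have key : ∀ f : FreeAlgebra k Bool, ∀ a ∈ S,
        a * RingQuot.mkAlgHom k (WeylRel k) f ∈ S := by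
      intro f
      induction f using FreeAlgebra.induction with
      | grade0 r =>
        intro a ha
        rw [AlgHom.commutes, ← Algebra.commutes, ← Algebra.smul_def]
        exact hks r a ha
      | grade1 b =>
        cases b
        · intro a ha; exact hmulx a ha
        · intro a ha; exact hmuld a ha
      | mul f g ihf ihg =>
        intro a ha
        rw [map_mul, ← mul_assoc]
        exact ihg _ (ihf _ ha)
      | add f g ihf ihg =>
        intro a ha
        rw [map_add, mul_add]
        exact add_mem (ihf a ha) (ihg a ha)
    intro a _
    obtain ⟨f, rfl⟩ := RingQuot.mkAlgHom_surjective k (WeylRel k) a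
    simpa [one_mul] using key f 1 h00
  letI RI : Ring ↥R := inferInstance
  letI AG : AddCommGroup (RingQuot (WeylRel k)) := inferInstance
  letI M1 : @Module ↥R (RingQuot (WeylRel k)) (Ring.toSemiring (self := RI))
      (AddCommGroup.toAddCommMonoid (self := AG)) := R.moduleLeft
  have key := @Module.Basis.mk_apply (Fin p × Fin p) ↥R (RingQuot (WeylRel k))
    (Ring.toSemiring (self := RI)) (AddCommGroup.toAddCommMonoid (self := AG)) M1 v hli hspan
  exact ⟨_, key⟩
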